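/- Let ρ be a d×d complex positive semidefinite matrix with trace 1, let 0 < α < 1, and let U_1, …, U_N (N ≥ 3) be d×d unitary matrices. Then: ∑_{s=1}^N I^α_ρ(U_s) ≥ (1/(N − 2)) · [ ∑_{1 ≤ s < t ≤ N} I^α_ρ(U_s + U_t) − (1/(N − 1)²) · (∑_{1 ≤ s < t ≤ N} √(I^α_ρ(U_s + U_t)))² ], where √ denotes the real square root. -/

import Mathlib

open Matrix Finset
open scoped ComplexOrder InnerProductSpace

/-- `ρ^α` via the continuous functional calculus applied to `t ↦ t ^ α`. -/
noncomputable def mpow {d : ℕ} (ρ : Matrix (Fin d) (Fin d) ℂ) (α : ℝ) :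
    Matrix (Fin d) (Fin d) ℂ :=
  cfc (fun t : ℝ => t ^ α) ρ

/-- The Wigner–Yanase–Dyson skew information
`I^α_ρ(K) = −(1/2) Tr([ρ^α, K†] [ρ^{1−α}, K])` of an arbitrary matrix `K`. -/
noncomputable def wyd {d : ℕ} (ρ : Matrix (Fin d) (Fin d) ℂ) (α : ℝ)
    (K : Matrix (Fin d) (Fin d) ℂ) : ℝ :=
  (-(1 / 2 : ℂ) *
    ((mpow ρ α * Kᴴ - Kᴴ * mpow ρ α) * (mpow ρ (1 - α) * K - K * mpow ρ (1 - α))).trace).re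


lemma sum_pairs {N : ℕ} {M : Type*} [AddCommMonoid M] (G : Fin N → Fin N → M) :
    ∑ p ∈ univ.filter (fun p : Fin N × Fin N => p.1 < p.2), (G p.1 p.2 + G p.2 p.1) =
      ∑ p ∈ univ.filter (fun p : Fin N × Fin N => p.1 ≠ p.2), G p.1 p.2 := by
  rw [Finset.sum_add_distrib]
  have h2 : ∑ p ∈ univ.filter (fun p : Fin N × Fin N => p.1 < p.2), G p.2 p.1 =
      ∑ p ∈ univ.filter (fun p : Fin N × Fin N => p.2 < p.1), G p.1 p.2 := by
    refine Finset.sum_equiv (Equiv.prodComm _ _) ?_ ?_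
    · intro p; simp
    · intro p _; rfl
  rw [h2, ← Finset.sum_union]
  · congr 1
    ext p
    simp only [mem_union, mem_filter, mem_univ, true_and, ne_eq]
    exact ⟨fun h => by rcases h with h|h; exacts [ne_of_lt h, (ne_of_lt h).symm],
      fun h => lt_or_gt_of_ne h⟩
  · rw [Finset.disjoint_filter]
    intro p _ h1
    simp only [not_lt]
    exact le_of_lt h1

lemma sum_ne_eq {N : ℕ} {M : Type*} [AddCommGroup M] (G : Fin N → Fin N → M) :
    ∑ p ∈ univ.filter (fun p : Fin N × Fin N => p.1 ≠ p.2), G p.1 p.2 =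
      (∑ s, ∑ t, G s t) - ∑ s, G s s := by
  have h := Finset.sum_filter_add_sum_filter_not (univ : Finset (Fin N × Fin N))
    (fun p => p.1 = p.2) (fun p => G p.1 p.2)
  have hdiag : ∑ p ∈ univ.filter (fun p : Fin N × Fin N => p.1 = p.2), G p.1 p.2 =
      ∑ s, G s s := by
    refine Finset.sum_nbij' (fun p => p.1) (fun s => (s, s)) ?_ ?_ ?_ ?_ ?_ <;>
      simp +contextual [eq_comm]
  have htot : ∑ p : Fin N × Fin N, G p.1 p.2 = ∑ s, ∑ t, G s t := by
    rw [Fintype.sum_prod_type]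
  rw [← htot, ← hdiag]
  exact eq_sub_of_add_eq (by rw [add_comm] at h; exact h)

section ips
variable {E : Type*} [NormedAddCommGroup E] [InnerProductSpace ℂ E]

lemma double_inner_sum {N : ℕ} (v : Fin N → E) :
    ∑ s, ∑ t, RCLike.re (⟪v s, v t⟫_ℂ) = ‖∑ s, v s‖^2 := by
  rw [← inner_self_eq_norm_sq (𝕜 := ℂ) (∑ s, v s), sum_inner, map_sum]
  refine Finset.sum_congr rfl fun s _ => ?_
  rw [inner_sum, map_sum]

lemma pair_norm_sq_identity {N : ℕ} (v : Fin N → E) :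
    ∑ p ∈ univ.filter (fun p : Fin N × Fin N => p.1 < p.2), ‖v p.1 + v p.2‖^2 =
      ((N:ℝ) - 2) * ∑ s, ‖v s‖^2 + ‖∑ s, v s‖^2 := by
  have key : ∀ s t : Fin N, ‖v s + v t‖^2
      = ‖v s‖^2 + 2 * RCLike.re (⟪v s, v t⟫_ℂ) + ‖v t‖^2 := fun s t => norm_add_sq (𝕜 := ℂ) _ _
  have h2S : 2 * ∑ p ∈ univ.filter (fun p : Fin N × Fin N => p.1 < p.2), ‖v p.1 + v p.2‖^2 =
      ∑ p ∈ univ.filter (fun p : Fin N × Fin N => p.1 ≠ p.2), ‖v p.1 + v p.2‖^2 := by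
    rw [← sum_pairs (fun s t => ‖v s + v t‖^2), two_mul, Finset.sum_add_distrib]
    congr 1
    refine Finset.sum_congr rfl fun p _ => ?_
    rw [add_comm (v p.1) (v p.2)]
  have hne := sum_ne_eq (fun s t => ‖v s + v t‖^2)
  have hall : ∑ s, ∑ t, ‖v s + v t‖^2 =
      2*(N:ℝ)*(∑ s, ‖v s‖^2) + 2*‖∑ s, v s‖^2 := by
    simp_rw [key, Finset.sum_add_distrib, Finset.sum_const, card_univ, Fintype.card_fin,
      nsmul_eq_mul, ← Finset.mul_sum]
    rw [double_inner_sum]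
    ring
  have hdiag : ∑ s : Fin N, ‖v s + v s‖^2 = 4 * ∑ s, ‖v s‖^2 := by
    rw [Finset.mul_sum]
    refine Finset.sum_congr rfl fun s _ => ?_
    rw [← two_smul ℝ (v s), norm_smul]
    simp
    ring
  rw [hall, hdiag] at hne
  linarith [h2S, hne]

lemma pair_sum_vec {N : ℕ} (v : Fin N → E) :
    ∑ p ∈ univ.filter (fun p : Fin N × Fin N => p.1 < p.2), (v p.1 + v p.2) =
      ((N:ℝ) - 1) • ∑ s, v s := by
  have h := sum_pairs (fun s t : Fin N => v s)
  have hne := sum_ne_eq (fun s t : Fin N => v s)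
  rw [hne] at h
  have htot : ∑ s : Fin N, ∑ t : Fin N, v s = (N:ℝ) • ∑ s, v s := by
    simp_rw [Finset.sum_const, card_univ, Fintype.card_fin]
    rw [← Finset.smul_sum, Nat.cast_smul_eq_nsmul]
  rw [htot] at h
  rw [h, sub_smul, one_smul]

lemma norm_sum_le_pairs {N : ℕ} (hN : 1 ≤ N) (v : Fin N → E) :
    ((N:ℝ) - 1) * ‖∑ s, v s‖ ≤
      ∑ p ∈ univ.filter (fun p : Fin N × Fin N => p.1 < p.2), ‖v p.1 + v p.2‖ := by
  have h1 : ((N:ℝ) - 1) * ‖∑ s, v s‖ = ‖((N:ℝ) - 1) • ∑ s, v s‖ := by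
    rw [norm_smul, Real.norm_eq_abs, abs_of_nonneg (by
      have : (1:ℝ) ≤ (N:ℝ) := by exact_mod_cast hN
      linarith)]
  rw [h1, ← pair_sum_vec]
  exact norm_sum_le _ _

lemma key_ineq {N : ℕ} (hN : 3 ≤ N) (v : Fin N → E) :
    ∑ s, ‖v s‖^2 ≥
      (1 / ((N : ℝ) - 2)) *
        ((∑ p ∈ univ.filter (fun p : Fin N × Fin N => p.1 < p.2), ‖v p.1 + v p.2‖^2) -
          (1 / ((N : ℝ) - 1) ^ 2) *
            (∑ p ∈ univ.filter (fun p : Fin N × Fin N => p.1 < p.2), ‖v p.1 + v p.2‖) ^ 2) := by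
  have hN3 : (3:ℝ) ≤ (N:ℝ) := by exact_mod_cast hN
  have hP := pair_norm_sq_identity v
  have hQ := norm_sum_le_pairs (by omega) v
  set W := ‖∑ s, v s‖ with hW
  set Q := ∑ p ∈ univ.filter (fun p : Fin N × Fin N => p.1 < p.2), ‖v p.1 + v p.2‖ with hQdef
  have hWn : 0 ≤ W := norm_nonneg _
  have hQn : 0 ≤ Q := Finset.sum_nonneg fun p _ => norm_nonneg _
  rw [ge_iff_le, one_div, inv_mul_le_iff₀ (by linarith), hP]
  have hsq : (((N:ℝ) - 1) * W)^2 ≤ Q^2 := by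
    apply sq_le_sq' <;> nlinarith
  have hden : (0:ℝ) < ((N:ℝ) - 1)^2 := by nlinarith
  have : W^2 ≤ 1 / ((N:ℝ) - 1)^2 * Q^2 := by
    rw [div_mul_eq_mul_div, one_mul, le_div_iff₀ hden]
    nlinarith
  linarith
end ips

lemma term_calc (x y u v : ℝ) (m : ℂ) :
    (-(1/2:ℂ) * ((((x:ℂ) - y) * (starRingEnd ℂ) m) * (((u:ℂ) - v) * m))).re
      = (x - y) * (v - u) / 2 * ‖m‖^2 := by
  have h1 : (((x:ℂ) - y) * (starRingEnd ℂ) m) * (((u:ℂ) - v) * m)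
      = (((x:ℂ) - y) * ((u:ℂ) - v)) * (m * (starRingEnd ℂ) m) := by ring
  rw [h1, Complex.mul_conj]
  have h2 : (-(1/2:ℂ)) * ((((x:ℂ) - y) * ((u:ℂ) - v)) * (Complex.normSq m : ℂ))
      = (((- ((x - y) * (u - v) * Complex.normSq m) / 2 : ℝ)) : ℂ) := by
    push_cast; ring
  rw [h2, Complex.ofReal_re]
  have h3 : (Complex.normSq m : ℝ) = ‖m‖^2 := by
    rw [Complex.normSq_eq_norm_sq]
  rw [h3]; ring

lemma euclid_norm_sq {ι : Type*} [Fintype ι] (x : EuclideanSpace ℂ ι) :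
    ‖x‖^2 = ∑ i, ‖x i‖^2 := by
  rw [EuclideanSpace.norm_eq, Real.sq_sqrt]
  exact Finset.sum_nonneg fun i _ => sq_nonneg _

lemma wyd_repr {d : ℕ} (ρ : Matrix (Fin d) (Fin d) ℂ) (hρ : ρ.PosSemidef)
    (α : ℝ) (hα0 : 0 < α) (hα1 : α < 1) :
    ∃ T : Matrix (Fin d) (Fin d) ℂ → EuclideanSpace ℂ (Fin d × Fin d),
      (∀ K L, T (K + L) = T K + T L) ∧ ∀ K, wyd ρ α K = ‖T K‖ ^ 2 := by
  have hA := hρ.1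
  set lam : Fin d → ℝ := hA.eigenvalues with hlamdef
  have hlam : ∀ i, 0 ≤ lam i := hρ.eigenvalues_nonneg
  set V : Matrix (Fin d) (Fin d) ℂ := (hA.eigenvectorUnitary : Matrix (Fin d) (Fin d) ℂ)
    with hVdef
  have hV1 : V * star V = 1 := Unitary.coe_mul_star_self _
  have hV2 : star V * V = 1 := Unitary.coe_star_mul_self _
  set a : Fin d → ℝ := fun i => lam i ^ α with hadef
  set b : Fin d → ℝ := fun i => lam i ^ (1 - α) with hbdef
  set c : Fin d × Fin d → ℝ := fun p => (a p.1 - a p.2) * (b p.1 - b p.2) / 2 with hcdef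
  have hc : ∀ p, 0 ≤ c p := by
    intro p
    apply div_nonneg _ (by norm_num)
    rcases le_total (lam p.1) (lam p.2) with h | h
    · have h1 : a p.1 ≤ a p.2 := Real.rpow_le_rpow (hlam _) h (by linarith)
      have h2 : b p.1 ≤ b p.2 := Real.rpow_le_rpow (hlam _) h (by linarith)
      nlinarith
    · have h1 : a p.2 ≤ a p.1 := Real.rpow_le_rpow (hlam _) h (by linarith)
      have h2 : b p.2 ≤ b p.1 := Real.rpow_le_rpow (hlam _) h (by linarith)
      nlinarith
  have hDa : mpow ρ α = V * diagonal (fun i => ((a i : ℝ) : ℂ)) * star V := by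
    rw [mpow, hA.cfc_eq]; rfl
  have hDb : mpow ρ (1 - α) = V * diagonal (fun i => ((b i : ℝ) : ℂ)) * star V := by
    rw [mpow, hA.cfc_eq]; rfl
  set Da : Matrix (Fin d) (Fin d) ℂ := diagonal (fun i => ((a i : ℝ) : ℂ)) with hDadef
  set Db : Matrix (Fin d) (Fin d) ℂ := diagonal (fun i => ((b i : ℝ) : ℂ)) with hDbdef
  refine ⟨fun K => (WithLp.toLp 2 (fun p => ((Real.sqrt (c p) : ℝ) : ℂ) * (star V * K * V) p.2 p.1) :
      EuclideanSpace ℂ (Fin d × Fin d)), ?_, ?_⟩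
  · intro K L
    ext p
    simp only [PiLp.toLp_apply, PiLp.add_apply, Matrix.mul_add, Matrix.add_mul, Matrix.add_apply]
    ring
  · intro K
    -- collapse conjugations
    have conj_lemma : ∀ X Y : Matrix (Fin d) (Fin d) ℂ,
        (V * X * star V) * (V * Y * star V) = V * (X * Y) * star V := by
      intro X Y
      calc (V * X * star V) * (V * Y * star V)
          = V * X * (star V * V) * Y * star V := by
            simp only [Matrix.mul_assoc]
        _ = V * (X * Y) * star V := by rw [hV2]; simp only [Matrix.mul_assoc, Matrix.one_mul]
    have hsub : ∀ X Y : Matrix (Fin d) (Fin d) ℂ,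
        V * X * star V - V * Y * star V = V * (X - Y) * star V := by
      intro X Y
      rw [Matrix.mul_sub, Matrix.sub_mul]
    have hKrec : K = V * (star V * K * V) * star V := by
      calc K = (V * star V) * K * (V * star V) := by rw [hV1, Matrix.one_mul, Matrix.mul_one]
        _ = V * (star V * K * V) * star V := by simp only [Matrix.mul_assoc]
    have hKH : Kᴴ = V * (star V * K * V)ᴴ * star V := by
      conv_lhs => rw [hKrec]
      simp only [Matrix.conjTranspose_mul, Matrix.star_eq_conjTranspose,
        Matrix.conjTranspose_conjTranspose, Matrix.mul_assoc]
    set Mk : Matrix (Fin d) (Fin d) ℂ := star V * K * V with hMkdef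
    have htr : ((mpow ρ α * Kᴴ - Kᴴ * mpow ρ α) *
          (mpow ρ (1 - α) * K - K * mpow ρ (1 - α))).trace
        = ((Da * Mkᴴ - Mkᴴ * Da) * (Db * Mk - Mk * Db)).trace := by
      conv_lhs => rw [hDa, hDb, hKH, hKrec]
      rw [conj_lemma Da Mkᴴ, conj_lemma Mkᴴ Da, conj_lemma Db Mk, conj_lemma Mk Db,
        hsub (Da * Mkᴴ) (Mkᴴ * Da), hsub (Db * Mk) (Mk * Db),
        conj_lemma (Da * Mkᴴ - Mkᴴ * Da) (Db * Mk - Mk * Db),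
        Matrix.trace_mul_cycle, ← Matrix.mul_assoc, hV2, Matrix.one_mul]
    -- entrywise trace
    have hentry : ((Da * Mkᴴ - Mkᴴ * Da) * (Db * Mk - Mk * Db)).trace
        = ∑ i, ∑ j, ((((a i : ℝ) : ℂ) - (a j : ℝ)) * (starRingEnd ℂ) (Mk j i)) *
            ((((b j : ℝ) : ℂ) - (b i : ℝ)) * Mk j i) := by
      rw [Matrix.trace]
      refine Finset.sum_congr rfl fun i _ => ?_
      rw [Matrix.diag_apply, Matrix.mul_apply]
      refine Finset.sum_congr rfl fun j _ => ?_
      simp only [Matrix.sub_apply, hDadef, hDbdef, Matrix.diagonal_mul, Matrix.mul_diagonal,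
        Matrix.conjTranspose_apply, RCLike.star_def]
      ring
    -- final computation
    rw [wyd, htr, hentry]
    rw [euclid_norm_sq]
    rw [Finset.mul_sum, Complex.re_sum]
    rw [Fintype.sum_prod_type]
    refine Finset.sum_congr rfl fun i _ => ?_
    rw [Finset.mul_sum, Complex.re_sum]
    refine Finset.sum_congr rfl fun j _ => ?_
    rw [term_calc]
    rw [PiLp.toLp_apply, norm_mul, mul_pow, Complex.norm_real, Real.norm_eq_abs,
      abs_of_nonneg (Real.sqrt_nonneg _), Real.sq_sqrt (hc (i, j))]

theorem unitary_uncertainty_Lb1 (d N : ℕ) (hN : 3 ≤ N)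
    (ρ : Matrix (Fin d) (Fin d) ℂ) (hρ : ρ.PosSemidef) (hTr : ρ.trace = 1)
    (α : ℝ) (hα0 : 0 < α) (hα1 : α < 1)
    (U : Fin N → Matrix (Fin d) (Fin d) ℂ)
    (hU : ∀ s, U s ∈ Matrix.unitaryGroup (Fin d) ℂ) :
    ∑ s, wyd ρ α (U s) ≥
      (1 / ((N : ℝ) - 2)) *
        ((∑ p ∈ univ.filter (fun p : Fin N × Fin N => p.1 < p.2),
            wyd ρ α (U p.1 + U p.2)) -
          (1 / ((N : ℝ) - 1) ^ 2) *
            (∑ p ∈ univ.filter (fun p : Fin N × Fin N => p.1 < p.2),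
              Real.sqrt (wyd ρ α (U p.1 + U p.2))) ^ 2) := by
  obtain ⟨T, hadd, hrepr⟩ := wyd_repr ρ hρ α hα0 hα1
  have h2 : ∀ p : Fin N × Fin N, Real.sqrt (wyd ρ α (U p.1 + U p.2)) =
      ‖T (U p.1) + T (U p.2)‖ := fun p => by
    rw [hrepr, hadd, Real.sqrt_sq (norm_nonneg _)]
  simp_rw [h2, hrepr, hadd]
  exact key_ineq hN (fun s => T (U s))
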